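/- Let a^U, a^L, b be Δ_C-valued random vectors with E[a^U] = (M^0)'p^0 and E[a^L | b] = (M^0)'b almost surely, where M^0 is a nonsingular row-stochastic C×C matrix with all entries strictly positive (Assumption 2) and p^0 ∈ Δ_C has all entries strictly positive, and suppose that for every i ∈ {1,…,C} and every ε > 0, P(b_i ≥ 1 − ε) > 0 (Assumption 1). Fix ξ > 0 and define the population loss f(M, p) = E[D_KL(a^U ‖ M'p)] + ξ·E[D_KL(a^L ‖ M'b)] for row-stochastic C×C matrices M and p ∈ Δ_C. Then (M^0, p^0) is the unique global minimizer of f: for every row-stochastic M and p ∈ Δ_C with (M, p) ≠ (M^0, p^0), f(M, p) > f(M^0, p^0), as elements of [0,∞]. -/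

import Mathlib

open MeasureTheory ProbabilityTheory Filter Finset
open scoped ENNReal NNReal BigOperators

noncomputable section

namespace GBQL

/-- The probability simplex Δ_C in ℝ^C. -/
def simplex (C : ℕ) : Set (Fin C → ℝ) :=
  {x | (∀ i, 0 ≤ x i) ∧ ∑ i, x i = 1}

/-- A C×C matrix (as a function) is row-stochastic. -/
def rowStochastic {C : ℕ} (M : Fin C → Fin C → ℝ) : Prop :=
  (∀ i j, 0 ≤ M i j) ∧ ∀ i, ∑ j, M i j = 1

/-- M' x, the transpose of M applied to x : (M'x)_j = Σ_i M_{ij} x_i. -/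
def mtv {C : ℕ} (M : Fin C → Fin C → ℝ) (x : Fin C → ℝ) : Fin C → ℝ :=
  fun j => ∑ i, M i j * x i

open scoped Classical in
/-- Kullback–Leibler divergence D_KL(p‖q) = Σ_j p_j log(p_j/q_j) as an element of [0,∞],
with conventions 0·log(0/x) = 0 and p_j log(p_j/0) = ∞ for p_j > 0. -/
def klDiv {C : ℕ} (p q : Fin C → ℝ) : ℝ≥0∞ :=
  if ∃ j, 0 < p j ∧ q j = 0 then ⊤
  else ENNReal.ofReal (∑ j, if p j = 0 then 0 else p j * Real.log (p j / q j))

/-- Real-valued Kullback–Leibler divergence (agreeing with `klDiv` whenever `q` has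
strictly positive entries). -/
def klReal {C : ℕ} (p q : Fin C → ℝ) : ℝ :=
  ∑ j, if p j = 0 then 0 else p j * Real.log (p j / q j)

/-- Completion of a C×(C−1) matrix M̃ to a C×C matrix M with M_{iC} = 1 − Σ_{j<C} M_{ij}. -/
def completeM {c : ℕ} (Mt : Fin (c+1) → Fin c → ℝ) : Fin (c+1) → Fin (c+1) → ℝ :=
  fun i j => if h : (j : ℕ) < c then Mt i ⟨j, h⟩ else 1 - ∑ k, Mt i k

/-- Completion of p̃ ∈ ℝ^{C−1} to p ∈ ℝ^C with p_C = 1 − Σ_{i<C} p_i. -/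
def completeV {c : ℕ} (pt : Fin c → ℝ) : Fin (c+1) → ℝ :=
  fun i => if h : (i : ℕ) < c then pt ⟨i, h⟩ else 1 - ∑ k, pt k

/-- The first C−1 columns of a C×C matrix. -/
def truncM {c : ℕ} (M : Fin (c+1) → Fin (c+1) → ℝ) : Fin (c+1) → Fin c → ℝ :=
  fun i j => M i (Fin.castSucc j)

/-- The first C−1 coordinates of a vector in ℝ^C. -/
def truncV {c : ℕ} (p : Fin (c+1) → ℝ) : Fin c → ℝ := fun i => p (Fin.castSucc i)

/-- The parameter space: θ = (M̃, p̃). -/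
abbrev Param (c : ℕ) := (Fin (c+1) → Fin c → ℝ) × (Fin c → ℝ)

/-- S_d = {x ∈ ℝ^d : x_i ≥ 0, Σ_i x_i ≤ 1}. -/
def Sset (d : ℕ) : Set (Fin d → ℝ) := {x | (∀ i, 0 ≤ x i) ∧ ∑ i, x i ≤ 1}

/-- Θ = (S_{C−1})^C × S_{C−1}. -/
def Theta (c : ℕ) : Set (Param c) := {θ | (∀ i, θ.1 i ∈ Sset c) ∧ θ.2 ∈ Sset c}

/-- ℓ1 distance on the concatenated coordinates of θ. -/
def l1dist {c : ℕ} (θ θ' : Param c) : ℝ :=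
  (∑ i, ∑ j, |θ.1 i j - θ'.1 i j|) + ∑ i, |θ.2 i - θ'.2 i|

/-- The empirical loss f_N(θ), valued in [0,∞]. -/
def fN {c : ℕ} (N n : ℕ) (aU aL bL : ℕ → Fin (c+1) → ℝ) (θ : Param c) : ℝ≥0∞ :=
  ((∑ r ∈ Finset.range N, klDiv (aU r) (mtv (completeM θ.1) (completeV θ.2))) +
    ∑ r ∈ Finset.range n, klDiv (aL r) (mtv (completeM θ.1) (bL r))) / (N : ℝ≥0∞)

/-- The empirical loss f_N(θ), real-valued version (valid near interior points). -/
def fNreal {c : ℕ} (N n : ℕ) (aU aL bL : ℕ → Fin (c+1) → ℝ) (θ : Param c) : ℝ :=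
  ((∑ r ∈ Finset.range N, klReal (aU r) (mtv (completeM θ.1) (completeV θ.2))) +
    ∑ r ∈ Finset.range n, klReal (aL r) (mtv (completeM θ.1) (bL r))) / (N : ℝ)

/-- exp(−x) for x ∈ [0,∞], with exp(−∞) = 0. -/
def expNeg (x : ℝ≥0∞) : ℝ≥0∞ :=
  if x = ⊤ then 0 else ENNReal.ofReal (Real.exp (-x.toReal))

/-- The extended logarithm [0,∞] → [−∞,∞]. -/
def elog (x : ℝ≥0∞) : EReal :=
  if x = 0 then ⊥ else if x = ⊤ then ⊤ else ((Real.log x.toReal : ℝ) : EReal)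

/-- Index set for the coordinates of θ = (M̃, p̃): pairs (i,j) for M̃ entries and i for p̃. -/
abbrev Idx (c : ℕ) := (Fin (c+1) × Fin c) ⊕ Fin c

/-- Coordinates of θ as a vector indexed by `Idx c`. -/
def vecParam {c : ℕ} (θ : Param c) : Idx c → ℝ :=
  Sum.elim (fun ij => θ.1 ij.1 ij.2) (fun i => θ.2 i)

/-- Standard basis vectors of the parameter space, indexed by `Idx c`. -/
def basisP (c : ℕ) : Idx c → Param c :=
  Sum.elim (fun ij => (fun i j => if i = ij.1 ∧ j = ij.2 then 1 else 0, 0))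
    (fun i0 => (0, fun i => if i = i0 then 1 else 0))

section AuxLemmas

variable {C : ℕ}

lemma simplex_exists_pos {x : Fin C → ℝ} (hx : x ∈ simplex C) : ∃ i, 0 < x i := by
  by_contra h
  push_neg at h
  have hz : ∀ i, x i = 0 := fun i => le_antisymm (h i) (hx.1 i)
  have h2 := hx.2
  rw [Finset.sum_congr rfl (fun i _ => hz i), Finset.sum_const, smul_zero] at h2
  exact one_ne_zero h2.symm

lemma simplex_le_one {x : Fin C → ℝ} (hx : x ∈ simplex C) (j : Fin C) : x j ≤ 1 := by
  calc x j ≤ ∑ i, x i := Finset.single_le_sum (f := x) (fun i _ => hx.1 i) (Finset.mem_univ j)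
  _ = 1 := hx.2

lemma rowStochastic_le_one {M : Fin C → Fin C → ℝ} (hM : rowStochastic M) (i j : Fin C) :
    M i j ≤ 1 := by
  calc M i j ≤ ∑ k, M i k := Finset.single_le_sum (fun k _ => hM.1 i k) (Finset.mem_univ j)
  _ = 1 := hM.2 i

lemma mtv_mem_simplex {M : Fin C → Fin C → ℝ} (hM : rowStochastic M)
    {x : Fin C → ℝ} (hx : x ∈ simplex C) : mtv M x ∈ simplex C := by
  constructor
  · intro j
    exact Finset.sum_nonneg fun i _ => mul_nonneg (hM.1 i j) (hx.1 i)
  · rw [show ∑ j, mtv M x j = ∑ i, (∑ j, M i j) * x i by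
      simp_rw [mtv, Finset.sum_mul]; rw [Finset.sum_comm]]
    simp_rw [hM.2, one_mul]
    exact hx.2

lemma mtv_ge {M : Fin C → Fin C → ℝ} {m : ℝ} (hM : ∀ i j, m ≤ M i j)
    {x : Fin C → ℝ} (hx : x ∈ simplex C) (j : Fin C) : m ≤ mtv M x j := by
  calc m = ∑ i, m * x i := by rw [← Finset.mul_sum, hx.2, mul_one]
  _ ≤ ∑ i, M i j * x i := Finset.sum_le_sum fun i _ => mul_le_mul_of_nonneg_right (hM i j) (hx.1 i)
  _ = mtv M x j := rfl

lemma mtv_pos {M : Fin C → Fin C → ℝ} (hM : ∀ i j, 0 < M i j)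
    {x : Fin C → ℝ} (hx : x ∈ simplex C) (j : Fin C) : 0 < mtv M x j := by
  obtain ⟨i0, hi0⟩ := simplex_exists_pos hx
  exact Finset.sum_pos' (fun i _ => mul_nonneg (hM i j).le (hx.1 i))
    ⟨i0, Finset.mem_univ i0, mul_pos (hM i0 j) hi0⟩

lemma mtv_le_one {M : Fin C → Fin C → ℝ} (hM : rowStochastic M)
    {x : Fin C → ℝ} (hx : x ∈ simplex C) (j : Fin C) : mtv M x j ≤ 1 :=
  simplex_le_one (mtv_mem_simplex hM hx) j

lemma klDiv_eq_ofReal {p q : Fin C → ℝ} (h : ∀ j, 0 < p j → q j ≠ 0) :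
    klDiv p q = ENNReal.ofReal (klReal p q) := by
  rw [klDiv, if_neg]
  · rfl
  · rintro ⟨j, hpj, hqj⟩; exact h j hpj hqj

/-- per-term Gibbs bound : a - b ≤ term. -/
lemma term_ge {a b : ℝ} (ha : 0 ≤ a) (hb : 0 ≤ b) (h : 0 < a → 0 < b) :
    a - b ≤ (if a = 0 then (0:ℝ) else a * Real.log (a / b)) := by
  by_cases h0 : a = 0
  · simp [h0, hb]
  · rw [if_neg h0]
    have ha' : 0 < a := lt_of_le_of_ne ha (Ne.symm h0)
    have hb' : 0 < b := h ha'
    have hlog : Real.log (b / a) ≤ b / a - 1 :=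
      Real.log_le_sub_one_of_pos (div_pos hb' ha')
    have : a * Real.log (b / a) ≤ a * (b / a - 1) :=
      mul_le_mul_of_nonneg_left hlog ha'.le
    have hrw : Real.log (a / b) = - Real.log (b / a) := by
      rw [← Real.log_inv, inv_div]
    rw [hrw]
    have : a * (b/a - 1) = b - a := by field_simp
    nlinarith [mul_le_mul_of_nonneg_left hlog ha'.le]

lemma term_gt {a b : ℝ} (ha : 0 < a) (hb : 0 < b) (hne : a ≠ b) :
    a - b < a * Real.log (a / b) := by
  have hlog : Real.log (b / a) < b / a - 1 := by
    apply Real.log_lt_sub_one_of_pos (div_pos hb ha)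
    intro h
    rw [div_eq_one_iff_eq ha.ne'] at h
    exact hne h.symm
  have hrw : Real.log (a / b) = - Real.log (b / a) := by
    rw [← Real.log_inv, inv_div]
  rw [hrw]
  have h2 : a * Real.log (b/a) < a * (b/a - 1) := by
    exact mul_lt_mul_of_pos_left hlog ha
  have : a * (b/a - 1) = b - a := by field_simp
  nlinarith

lemma klReal_nonneg {p q : Fin C → ℝ} (hp : p ∈ simplex C) (hq0 : ∀ j, 0 ≤ q j)
    (hq1 : ∑ j, q j ≤ 1) (h : ∀ j, 0 < p j → 0 < q j) : 0 ≤ klReal p q := by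
  have : ∑ j, (p j - q j) ≤ klReal p q :=
    Finset.sum_le_sum fun j _ => term_ge (hp.1 j) (hq0 j) (h j)
  rw [Finset.sum_sub_distrib, hp.2] at this
  linarith

lemma klReal_pos {p q : Fin C → ℝ} (hp : p ∈ simplex C) (hq : q ∈ simplex C)
    (hpp : ∀ j, 0 < p j) (hq0 : ∀ j, 0 < q j) (hne : p ≠ q) : 0 < klReal p q := by
  obtain ⟨j0, hj0⟩ := Function.ne_iff.mp hne
  have hterm : ∀ j ∈ Finset.univ, p j - q j ≤
      (if p j = 0 then (0:ℝ) else p j * Real.log (p j / q j)) :=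
    fun j _ => term_ge (hp.1 j) (hq.1 j) (fun _ => hq0 j)
  have hstrict : p j0 - q j0 <
      (if p j0 = 0 then (0:ℝ) else p j0 * Real.log (p j0 / q j0)) := by
    rw [if_neg (hpp j0).ne']
    exact term_gt (hpp j0) (hq0 j0) hj0
  have : ∑ j, (p j - q j) < klReal p q :=
    Finset.sum_lt_sum hterm ⟨j0, Finset.mem_univ j0, hstrict⟩
  rw [Finset.sum_sub_distrib, hp.2, hq.2] at this
  linarith


lemma klReal_self (x : Fin C → ℝ) : klReal x x = 0 := by
  unfold klReal
  apply Finset.sum_eq_zero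
  intro j _
  by_cases h : x j = 0
  · simp [h]
  · rw [if_neg h, div_self h, Real.log_one, mul_zero]

lemma klReal_decomp {p q q' : Fin C → ℝ} (hp : ∀ j, 0 ≤ p j)
    (h : ∀ j, 0 < p j → 0 < q j ∧ 0 < q' j) :
    klReal p q = klReal p q' + ∑ j, p j * (Real.log (q' j) - Real.log (q j)) := by
  unfold klReal
  rw [← Finset.sum_add_distrib]
  apply Finset.sum_congr rfl
  intro j _
  by_cases h0 : p j = 0
  · simp [h0]
  · have hpj : 0 < p j := lt_of_le_of_ne (hp j) (Ne.symm h0)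
    obtain ⟨hqj, hq'j⟩ := h j hpj
    rw [if_neg h0, if_neg h0,
      Real.log_div h0 hqj.ne', Real.log_div h0 hq'j.ne']
    ring

lemma abs_mul_log_le_one {p : ℝ} (hp0 : 0 ≤ p) (hp1 : p ≤ 1) : |p * Real.log p| ≤ 1 := by
  by_cases h : p = 0
  · simp [h]
  · have hp : 0 < p := lt_of_le_of_ne hp0 (Ne.symm h)
    have h1 : p * Real.log p ≤ 0 :=
      mul_nonpos_of_nonneg_of_nonpos hp0 (Real.log_nonpos hp0 hp1)
    have h2 : Real.log p⁻¹ ≤ p⁻¹ - 1 := Real.log_le_sub_one_of_pos (by positivity)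
    rw [Real.log_inv] at h2
    have h3 : p * (-Real.log p) ≤ p * (p⁻¹ - 1) :=
      mul_le_mul_of_nonneg_left (by linarith) hp0
    have h4 : p * (p⁻¹ - 1) = 1 - p := by field_simp
    rw [abs_of_nonpos h1]
    nlinarith

lemma abs_klReal_le {p q : Fin C → ℝ} (hp0 : ∀ j, 0 ≤ p j) (hp1 : ∀ j, p j ≤ 1)
    {δ : ℝ} (hδ : 0 < δ) (hq : ∀ j, δ ≤ q j) (hq1 : ∀ j, q j ≤ 1) :
    |klReal p q| ≤ C * (1 + |Real.log δ|) := by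
  have key : ∀ j, |if p j = 0 then (0:ℝ) else p j * Real.log (p j / q j)| ≤ 1 + |Real.log δ| := by
    intro j
    by_cases h : p j = 0
    · rw [if_pos h, abs_zero]; positivity
    · rw [if_neg h]
      have hpj : 0 < p j := lt_of_le_of_ne (hp0 j) (Ne.symm h)
      have hqj : 0 < q j := lt_of_lt_of_le hδ (hq j)
      have hδ1 : δ ≤ 1 := le_trans (hq j) (hq1 j)
      rw [Real.log_div h hqj.ne', mul_sub]
      refine le_trans (abs_sub _ _) ?_
      have h1 : |p j * Real.log (p j)| ≤ 1 := abs_mul_log_le_one (hp0 j) (hp1 j)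
      have h2 : |p j * Real.log (q j)| ≤ |Real.log δ| := by
        rw [abs_mul]
        have hlq : |Real.log (q j)| ≤ |Real.log δ| := by
          rw [abs_of_nonpos (Real.log_nonpos hqj.le (hq1 j)),
            abs_of_nonpos (Real.log_nonpos hδ.le hδ1)]
          have := Real.log_le_log hδ (hq j)
          linarith
        calc |p j| * |Real.log (q j)| ≤ 1 * |Real.log δ| := by
              apply mul_le_mul _ hlq (abs_nonneg _) zero_le_one
              rw [abs_of_nonneg (hp0 j)]; exact hp1 j
        _ = |Real.log δ| := one_mul _
      linarith
  calc |klReal p q| ≤ ∑ j, |if p j = 0 then (0:ℝ) else p j * Real.log (p j / q j)| :=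
        Finset.abs_sum_le_sum_abs _ _
  _ ≤ ∑ _j : Fin C, (1 + |Real.log δ|) := Finset.sum_le_sum fun j _ => key j
  _ = C * (1 + |Real.log δ|) := by rw [Finset.sum_const, Finset.card_univ, Fintype.card_fin,
        nsmul_eq_mul]

variable {Ωs : Type*} [MeasurableSpace Ωs]

lemma measurable_klReal {a v : Ωs → Fin C → ℝ} (ha : Measurable a) (hv : Measurable v) :
    Measurable (fun ω => klReal (a ω) (v ω)) := by
  unfold klReal
  apply Finset.measurable_sum
  intro j _
  have haj : Measurable (fun ω => a ω j) := (measurable_pi_apply j).comp ha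
  have hvj : Measurable (fun ω => v ω j) := (measurable_pi_apply j).comp hv
  exact Measurable.ite (haj (measurableSet_singleton 0)) measurable_const
    (haj.mul ((Real.measurable_log).comp (haj.div hvj)))


variable {Ωs : Type*} [MeasurableSpace Ωs]

lemma measurable_klDiv {a v : Ωs → Fin C → ℝ} (ha : Measurable a) (hv : Measurable v) :
    Measurable (fun ω => klDiv (a ω) (v ω)) := by
  unfold klDiv
  have hs : MeasurableSet {ω : Ωs | ∃ j, 0 < a ω j ∧ v ω j = 0} := by
    have : {ω : Ωs | ∃ j, 0 < a ω j ∧ v ω j = 0}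
        = ⋃ j, ({ω | 0 < a ω j} ∩ {ω | v ω j = 0}) := by
      ext ω; simp [Set.mem_iUnion, Set.mem_inter_iff]
    rw [this]
    apply MeasurableSet.iUnion
    intro j
    exact (measurableSet_lt measurable_const ((measurable_pi_apply j).comp ha)).inter
      (((measurable_pi_apply j).comp hv) (measurableSet_singleton 0))
  exact Measurable.ite hs measurable_const
    (ENNReal.measurable_ofReal.comp (by
      apply Finset.measurable_sum
      intro j _
      have haj : Measurable (fun ω => a ω j) := (measurable_pi_apply j).comp ha
      have hvj : Measurable (fun ω => v ω j) := (measurable_pi_apply j).comp hv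
      exact Measurable.ite (haj (measurableSet_singleton 0)) measurable_const
        (haj.mul ((Real.measurable_log).comp (haj.div hvj)))))

lemma measurable_mtv {M : Fin C → Fin C → ℝ} {b : Ωs → Fin C → ℝ} (hb : Measurable b) (j : Fin C) :
    Measurable (fun ω => mtv M (b ω) j) := by
  unfold mtv
  apply Finset.measurable_sum
  intro i _
  exact measurable_const.mul ((measurable_pi_apply i).comp hb)

lemma mtv_injective {M0 : Fin C → Fin C → ℝ} (hdet : (Matrix.of M0).det ≠ 0)
    {p p0 : Fin C → ℝ} (h : mtv M0 p = mtv M0 p0) : p = p0 := by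
  have hme : ∀ x : Fin C → ℝ, mtv M0 x = Matrix.vecMul x (Matrix.of M0) := by
    intro x; funext j
    simp [mtv, Matrix.vecMul, dotProduct, mul_comm]
  rw [hme, hme] at h
  have hM : IsUnit (Matrix.of M0) := by
    rw [Matrix.isUnit_iff_isUnit_det]
    exact isUnit_iff_ne_zero.mpr hdet
  exact Matrix.vecMul_injective_iff_isUnit.mpr hM h

end AuxLemmas

set_option maxHeartbeats 1000000 in
/-- under E[a^U] = (M⁰)'p⁰, E[a^L|b] = (M⁰)'b a.s., with M⁰ nonsingular,
row-stochastic with strictly positive entries, p⁰ ∈ Δ_C with strictly positive entries, and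
Assumption 1 on b, the pair (M⁰, p⁰) is the unique global minimizer of
f(M,p) = E[D_KL(a^U ‖ M'p)] + ξ·E[D_KL(a^L ‖ M'b)]. -/
theorem stmt8 {Ωs : Type*} [MeasurableSpace Ωs] (μ : Measure Ωs) [IsProbabilityMeasure μ]
    {C : ℕ} (hC : 2 ≤ C)
    (aU aL b : Ωs → Fin C → ℝ)
    (haU_meas : Measurable aU) (haL_meas : Measurable aL) (hb_meas : Measurable b)
    (haU_simplex : ∀ ω, aU ω ∈ simplex C) (haL_simplex : ∀ ω, aL ω ∈ simplex C)
    (hb_simplex : ∀ ω, b ω ∈ simplex C)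
    (M0 : Fin C → Fin C → ℝ) (hM0 : rowStochastic M0) (hM0pos : ∀ i j, 0 < M0 i j)
    (hM0det : (Matrix.of M0).det ≠ 0)
    (p0 : Fin C → ℝ) (hp0 : p0 ∈ simplex C) (hp0pos : ∀ i, 0 < p0 i)
    (hmeanU : ∀ j, ∫ ω, aU ω j ∂μ = mtv M0 p0 j)
    (hcondL : ∀ j, μ[(fun ω => aL ω j) | MeasurableSpace.comap b inferInstance]
      =ᵐ[μ] fun ω => mtv M0 (b ω) j)
    (hpos : ∀ i : Fin C, ∀ ε > (0 : ℝ), 0 < μ {ω | 1 - ε ≤ b ω i})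
    (ξ : ℝ) (hξ : 0 < ξ)
    (M : Fin C → Fin C → ℝ) (hM : rowStochastic M)
    (p : Fin C → ℝ) (hp : p ∈ simplex C) (hne : (M, p) ≠ (M0, p0)) :
    (∫⁻ ω, klDiv (aU ω) (mtv M0 p0) ∂μ) +
        ENNReal.ofReal ξ * ∫⁻ ω, klDiv (aL ω) (mtv M0 (b ω)) ∂μ <
      (∫⁻ ω, klDiv (aU ω) (mtv M p) ∂μ) +
        ENNReal.ofReal ξ * ∫⁻ ω, klDiv (aL ω) (mtv M (b ω)) ∂μ := by
  classical
  have hCpos : 0 < C := by omega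
  haveI : NeZero C := ⟨hCpos.ne'⟩
  -- basic notation
  set q0U : Fin C → ℝ := mtv M0 p0 with hq0U_def
  set qU : Fin C → ℝ := mtv M p with hqU_def
  have hq0U_simplex : q0U ∈ simplex C := mtv_mem_simplex hM0 hp0
  have hqU_simplex : qU ∈ simplex C := mtv_mem_simplex hM hp
  have hq0Upos : ∀ j, 0 < q0U j := fun j => mtv_pos hM0pos hp0 j
  haveI : Nonempty (Fin C) := ⟨⟨0, hCpos⟩⟩
  -- min entry of M0
  set m0 : ℝ := Finset.univ.inf' Finset.univ_nonempty
      (fun ij : Fin C × Fin C => M0 ij.1 ij.2) with hm0_def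
  have hm0pos : 0 < m0 := by
    rw [hm0_def, Finset.lt_inf'_iff]
    exact fun ij _ => hM0pos ij.1 ij.2
  have hm0le : ∀ i j, m0 ≤ M0 i j := fun i j =>
    Finset.inf'_le _ (Finset.mem_univ (i, j))
  have hm0le1 : m0 ≤ 1 := le_trans (hm0le ⟨0,hCpos⟩ ⟨0,hCpos⟩)
    (rowStochastic_le_one hM0 _ _)
  -- lower bounds for the "true" second arguments
  have hq0L_ge : ∀ ω j, m0 ≤ mtv M0 (b ω) j := fun ω j => mtv_ge hm0le (hb_simplex ω) j
  have hq0L_le1 : ∀ ω j, mtv M0 (b ω) j ≤ 1 := fun ω j => mtv_le_one hM0 (hb_simplex ω) j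
  have hq0L_pos : ∀ ω j, 0 < mtv M0 (b ω) j := fun ω j => lt_of_lt_of_le hm0pos (hq0L_ge ω j)
  have hq0U_ge : ∀ j, m0 ≤ q0U j := fun j => mtv_ge hm0le hp0 j
  have hq0U_le1 : ∀ j, q0U j ≤ 1 := fun j => mtv_le_one hM0 hp0 j
  -- the uniform bound
  set K0 : ℝ := C * (1 + |Real.log m0|) with hK0_def
  have hK0nonneg : 0 ≤ K0 := by positivity
  -- LHS is finite
  have hbound_U0 : ∀ ω, |klReal (aU ω) q0U| ≤ K0 := fun ω =>
    abs_klReal_le (haU_simplex ω).1 (simplex_le_one (haU_simplex ω)) hm0pos hq0U_ge hq0U_le1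
  have hbound_L0 : ∀ ω, |klReal (aL ω) (mtv M0 (b ω))| ≤ K0 := fun ω =>
    abs_klReal_le (haL_simplex ω).1 (simplex_le_one (haL_simplex ω)) hm0pos (hq0L_ge ω)
      (hq0L_le1 ω)
  have hklU0_eq : ∀ ω, klDiv (aU ω) q0U = ENNReal.ofReal (klReal (aU ω) q0U) := fun ω =>
    klDiv_eq_ofReal (fun j _ => (hq0Upos j).ne')
  have hklL0_eq : ∀ ω, klDiv (aL ω) (mtv M0 (b ω))
      = ENNReal.ofReal (klReal (aL ω) (mtv M0 (b ω))) := fun ω =>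
    klDiv_eq_ofReal (fun j _ => (hq0L_pos ω j).ne')
  have hlint_le : ∀ (f : Ωs → ℝ), (∀ ω, |f ω| ≤ K0) →
      ∫⁻ ω, ENNReal.ofReal (f ω) ∂μ ≠ ⊤ := by
    intro f hf
    have : ∫⁻ ω, ENNReal.ofReal (f ω) ∂μ ≤ ∫⁻ _ω, ENNReal.ofReal K0 ∂μ :=
      lintegral_mono fun ω => ENNReal.ofReal_le_ofReal (le_trans (le_abs_self _) (hf ω))
    rw [lintegral_const, measure_univ, mul_one] at this
    exact ne_top_of_le_ne_top ENNReal.ofReal_ne_top this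
  have hLHS_ne_top : (∫⁻ ω, klDiv (aU ω) q0U ∂μ) +
      ENNReal.ofReal ξ * ∫⁻ ω, klDiv (aL ω) (mtv M0 (b ω)) ∂μ ≠ ⊤ := by
    apply ENNReal.add_ne_top.mpr
    constructor
    · rw [lintegral_congr hklU0_eq]
      exact hlint_le _ hbound_U0
    · apply ENNReal.mul_ne_top ENNReal.ofReal_ne_top
      rw [lintegral_congr hklL0_eq]
      exact hlint_le _ hbound_L0
  -- case : RHS infinite
  by_cases hRT : (∫⁻ ω, klDiv (aU ω) qU ∂μ) +
      ENNReal.ofReal ξ * ∫⁻ ω, klDiv (aL ω) (mtv M (b ω)) ∂μ = ⊤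
  · rw [hRT]
    exact hLHS_ne_top.lt_top
  -- RHS finite
  have hIU_ne : ∫⁻ ω, klDiv (aU ω) qU ∂μ ≠ ⊤ := by
    intro h; exact hRT (by rw [h, top_add])
  have hξ0 : ENNReal.ofReal ξ ≠ 0 := (ENNReal.ofReal_pos.mpr hξ).ne'
  have hIL_ne : ∫⁻ ω, klDiv (aL ω) (mtv M (b ω)) ∂μ ≠ ⊤ := by
    intro h
    exact hRT (by rw [h, ENNReal.mul_top hξ0, add_top])
  -- positivity of qU
  have hqUpos : ∀ j, 0 < qU j := by
    by_contra hcon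
    push_neg at hcon
    obtain ⟨j, hj⟩ := hcon
    have hqUj : qU j = 0 := le_antisymm hj (hqU_simplex.1 j)
    -- the set where aU _ j > 0 has positive measure
    have haUj_meas : Measurable (fun ω => aU ω j) := (measurable_pi_apply j).comp haU_meas
    have hs_meas : MeasurableSet {ω | 0 < aU ω j} :=
      measurableSet_lt measurable_const haUj_meas
    have hμs : μ {ω | 0 < aU ω j} ≠ 0 := by
      intro h0
      have hae : ∀ᵐ ω ∂μ, aU ω j = 0 := by
        have : ∀ᵐ ω ∂μ, ¬(0 < aU ω j) := by
          rw [ae_iff]; push_neg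
          simpa using h0
        filter_upwards [this] with ω hω
        exact le_antisymm (not_lt.mp hω) ((haU_simplex ω).1 j)
      have : ∫ ω, aU ω j ∂μ = 0 := by
        rw [integral_congr_ae hae, integral_zero]
      rw [hmeanU j] at this
      exact (hq0Upos j).ne' this
    have htop : ∫⁻ ω, klDiv (aU ω) qU ∂μ = ⊤ := by
      apply eq_top_iff.mpr
      calc (⊤ : ℝ≥0∞) = ⊤ * μ {ω | 0 < aU ω j} := (ENNReal.top_mul hμs).symm
      _ = ∫⁻ _ω in {ω | 0 < aU ω j}, ⊤ ∂μ := by rw [setLIntegral_const]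
      _ = ∫⁻ ω in {ω | 0 < aU ω j}, klDiv (aU ω) qU ∂μ := by
          apply setLIntegral_congr_fun hs_meas
          intro ω hω
          dsimp only
          rw [klDiv, if_pos ⟨j, hω, hqUj⟩]
      _ ≤ ∫⁻ ω, klDiv (aU ω) qU ∂μ := setLIntegral_le_lintegral _ _
    exact hIU_ne htop
  -- measurability
  have hqL_meas : Measurable (fun ω => mtv M (b ω)) :=
    measurable_pi_lambda _ (fun j => measurable_mtv hb_meas j)
  have hq0L_meas : Measurable (fun ω => mtv M0 (b ω)) :=
    measurable_pi_lambda _ (fun j => measurable_mtv hb_meas j)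
  have hklL_meas : Measurable (fun ω => klDiv (aL ω) (mtv M (b ω))) :=
    measurable_klDiv haL_meas hqL_meas
  -- a.e. goodness of the labeled term
  have hgood1 : ∀ᵐ ω ∂μ, ∀ j, 0 < aL ω j → 0 < mtv M (b ω) j := by
    filter_upwards [ae_lt_top hklL_meas hIL_ne] with ω hω j haj
    by_contra h
    have h0 : mtv M (b ω) j = 0 :=
      le_antisymm (not_lt.mp h) ((mtv_mem_simplex hM (hb_simplex ω)).1 j)
    rw [klDiv, if_pos ⟨j, haj, h0⟩] at hω
    exact absurd hω (lt_irrefl ⊤)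
  -- conditional expectation setup
  have hm : MeasurableSpace.comap b inferInstance ≤ (inferInstance : MeasurableSpace Ωs) :=
    hb_meas.comap_le
  haveI hsf : SigmaFinite (μ.trim hm) := inferInstance
  -- integrability of coordinates
  have hint_of_bound : ∀ (f : Ωs → ℝ) (K : ℝ), Measurable f → (∀ ω, |f ω| ≤ K) →
      Integrable f μ := by
    intro f K hf hb2
    apply Integrable.mono' (integrable_const K) hf.aestronglyMeasurable
    filter_upwards with ω
    rw [Real.norm_eq_abs]
    exact hb2 ω
  have haLj_int : ∀ j, Integrable (fun ω => aL ω j) μ := fun j =>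
    hint_of_bound _ 1 ((measurable_pi_apply j).comp haL_meas) (fun ω => by
      rw [abs_of_nonneg ((haL_simplex ω).1 j)]; exact simplex_le_one (haL_simplex ω) j)
  have haUj_int : ∀ j, Integrable (fun ω => aU ω j) μ := fun j =>
    hint_of_bound _ 1 ((measurable_pi_apply j).comp haU_meas) (fun ω => by
      rw [abs_of_nonneg ((haU_simplex ω).1 j)]; exact simplex_le_one (haU_simplex ω) j)
  have hq0Lj_int : ∀ j, Integrable (fun ω => mtv M0 (b ω) j) μ := fun j =>
    hint_of_bound _ 1 (measurable_mtv hb_meas j) (fun ω => by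
      rw [abs_of_nonneg (le_of_lt (hq0L_pos ω j))]; exact hq0L_le1 ω j)
  -- the degenerate sets are null
  have hAj_null : ∀ j, μ {ω | mtv M (b ω) j = 0} = 0 := by
    intro j
    set Sj := {ω | mtv M (b ω) j = 0} with hSj_def
    have hSjm : MeasurableSet[MeasurableSpace.comap b inferInstance] Sj := by
      refine ⟨{x | mtv M x j = 0}, ?_, rfl⟩
      exact (Finset.measurable_sum _ (fun i _ =>
        measurable_const.mul (measurable_pi_apply i))) (measurableSet_singleton 0)
    have hSj : MeasurableSet Sj := hm _ hSjm
    have hzero : ∫ ω in Sj, aL ω j ∂μ = 0 := by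
      have : ∫ ω in Sj, aL ω j ∂μ = ∫ _ω in Sj, (0:ℝ) ∂μ := by
        apply setIntegral_congr_ae hSj
        filter_upwards [hgood1] with ω hω hmem
        by_contra hne2
        have : 0 < aL ω j := lt_of_le_of_ne ((haL_simplex ω).1 j) (Ne.symm hne2)
        exact (hω j this).ne' hmem
      rw [this, integral_zero]
    have hc1 : ∫ ω in Sj, (μ[(fun ω => aL ω j)|MeasurableSpace.comap b inferInstance]) ω ∂μ = ∫ ω in Sj, aL ω j ∂μ :=
      setIntegral_condExp hm (haLj_int j) hSjm
    have hc2 : ∫ ω in Sj, (μ[(fun ω => aL ω j)|MeasurableSpace.comap b inferInstance]) ω ∂μ = ∫ ω in Sj, mtv M0 (b ω) j ∂μ :=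
      setIntegral_congr_ae hSj ((hcondL j).mono fun ω hω _ => hω)
    have hc3 : ∫ ω in Sj, mtv M0 (b ω) j ∂μ = 0 := by rw [← hc2, hc1, hzero]
    have hge : m0 * (μ Sj).toReal ≤ ∫ ω in Sj, mtv M0 (b ω) j ∂μ :=
      setIntegral_ge_of_const_le_real hSj (measure_ne_top μ _) (fun ω _ => hq0L_ge ω j)
        (hq0Lj_int j).integrableOn
    rw [hc3] at hge
    have htr : (μ Sj).toReal = 0 := by
      nlinarith [ENNReal.toReal_nonneg (a := μ Sj)]
    exact ((ENNReal.toReal_eq_zero_iff _).mp htr).resolve_right (measure_ne_top μ _)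
  have hgood2 : ∀ᵐ ω ∂μ, ∀ j, 0 < mtv M (b ω) j := by
    rw [ae_all_iff]
    intro j
    rw [ae_iff]
    refine measure_mono_null ?_ (hAj_null j)
    intro ω hω
    simp only [Set.mem_setOf_eq, not_lt] at hω ⊢
    exact le_antisymm hω ((mtv_mem_simplex hM (hb_simplex ω)).1 j)
  -- real-valued integrands
  have hfU0_nonneg : ∀ ω, 0 ≤ klReal (aU ω) q0U := fun ω =>
    klReal_nonneg (haU_simplex ω) (fun j => (hq0Upos j).le) (le_of_eq hq0U_simplex.2)
      (fun j _ => hq0Upos j)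
  have hfU_nonneg : ∀ ω, 0 ≤ klReal (aU ω) qU := fun ω =>
    klReal_nonneg (haU_simplex ω) (fun j => (hqUpos j).le) (le_of_eq hqU_simplex.2)
      (fun j _ => hqUpos j)
  have hfL0_nonneg : ∀ ω, 0 ≤ klReal (aL ω) (mtv M0 (b ω)) := fun ω =>
    klReal_nonneg (haL_simplex ω) (fun j => (hq0L_pos ω j).le)
      (le_of_eq (mtv_mem_simplex hM0 (hb_simplex ω)).2) (fun j _ => hq0L_pos ω j)
  have hfL_nonneg : ∀ᵐ ω ∂μ, 0 ≤ klReal (aL ω) (mtv M (b ω)) := by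
    filter_upwards [hgood1] with ω hω
    exact klReal_nonneg (haL_simplex ω) (mtv_mem_simplex hM (hb_simplex ω)).1
      (le_of_eq (mtv_mem_simplex hM (hb_simplex ω)).2) hω
  have int_fU0 : Integrable (fun ω => klReal (aU ω) q0U) μ :=
    hint_of_bound _ K0 (measurable_klReal haU_meas measurable_const) hbound_U0
  have int_fL0 : Integrable (fun ω => klReal (aL ω) (mtv M0 (b ω))) μ :=
    hint_of_bound _ K0 (measurable_klReal haL_meas hq0L_meas) hbound_L0
  -- qU has a positive minimum
  set δ1 : ℝ := Finset.univ.inf' Finset.univ_nonempty qU with hδ1_def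
  have hδ1pos : 0 < δ1 := by
    rw [hδ1_def, Finset.lt_inf'_iff]; exact fun j _ => hqUpos j
  have hδ1le : ∀ j, δ1 ≤ qU j := fun j => Finset.inf'_le _ (Finset.mem_univ j)
  have int_fU : Integrable (fun ω => klReal (aU ω) qU) μ :=
    hint_of_bound _ (C * (1 + |Real.log δ1|)) (measurable_klReal haU_meas measurable_const)
      (fun ω => abs_klReal_le (haU_simplex ω).1 (simplex_le_one (haU_simplex ω)) hδ1pos hδ1le
        (fun j => simplex_le_one hqU_simplex j))
  have hklU_eq : ∀ ω, klDiv (aU ω) qU = ENNReal.ofReal (klReal (aU ω) qU) := fun ω =>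
    klDiv_eq_ofReal (fun j _ => (hqUpos j).ne')
  have hklL_ae : ∀ᵐ ω ∂μ, klDiv (aL ω) (mtv M (b ω))
      = ENNReal.ofReal (klReal (aL ω) (mtv M (b ω))) := by
    filter_upwards [hgood1] with ω hω
    exact klDiv_eq_ofReal (fun j hj => (hω j hj).ne')
  have int_fL : Integrable (fun ω => klReal (aL ω) (mtv M (b ω))) μ := by
    refine ⟨(measurable_klReal haL_meas hqL_meas).aestronglyMeasurable, ?_⟩
    rw [hasFiniteIntegral_iff_ofReal hfL_nonneg]
    rw [← lintegral_congr_ae hklL_ae]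
    exact hIL_ne.lt_top
  -- the correction terms
  set g : Fin C → Ωs → ℝ :=
    fun j ω => Real.log (mtv M0 (b ω) j) - Real.log (mtv M (b ω) j) with hg_def
  have hg_meas : ∀ j, Measurable (g j) := fun j =>
    (Real.measurable_log.comp (measurable_mtv hb_meas j)).sub
      (Real.measurable_log.comp (measurable_mtv hb_meas j))
  -- decomposition of the labeled integrand
  have hdecompL : ∀ᵐ ω ∂μ, klReal (aL ω) (mtv M (b ω))
      = klReal (aL ω) (mtv M0 (b ω)) + ∑ j, aL ω j * g j ω := by
    filter_upwards [hgood1] with ω hω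
    exact klReal_decomp (haL_simplex ω).1 (fun j hj => ⟨hω j hj, hq0L_pos ω j⟩)
  have int_s' : Integrable (fun ω => ∑ j, aL ω j * g j ω) μ := by
    apply (int_fL.sub int_fL0).congr
    filter_upwards [hdecompL] with ω hω
    simp only [Pi.sub_apply]
    linarith
  -- u and w decomposition for integrability of each summand
  have hw_nonneg : ∀ j ω, 0 ≤ aL ω j * (-Real.log (mtv M (b ω) j)) := fun j ω =>
    mul_nonneg ((haL_simplex ω).1 j) (neg_nonneg.mpr (Real.log_nonpos
      ((mtv_mem_simplex hM (hb_simplex ω)).1 j) (mtv_le_one hM (hb_simplex ω) j)))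
  have int_u : ∀ j, Integrable (fun ω => aL ω j * Real.log (mtv M0 (b ω) j)) μ := by
    intro j
    apply hint_of_bound _ |Real.log m0|
      (((measurable_pi_apply j).comp haL_meas).mul
        (Real.measurable_log.comp (measurable_mtv hb_meas j)))
    intro ω
    show |aL ω j * Real.log (mtv M0 (b ω) j)| ≤ |Real.log m0|
    rw [abs_mul]
    have h1 : |aL ω j| ≤ 1 := by
      rw [abs_of_nonneg ((haL_simplex ω).1 j)]; exact simplex_le_one (haL_simplex ω) j
    have h2 : |Real.log (mtv M0 (b ω) j)| ≤ |Real.log m0| := by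
      rw [abs_of_nonpos (Real.log_nonpos (hq0L_pos ω j).le (hq0L_le1 ω j)),
        abs_of_nonpos (Real.log_nonpos hm0pos.le hm0le1)]
      have := Real.log_le_log hm0pos (hq0L_ge ω j)
      linarith
    calc |aL ω j| * |Real.log (mtv M0 (b ω) j)| ≤ 1 * |Real.log m0| :=
          mul_le_mul h1 h2 (abs_nonneg _) zero_le_one
    _ = |Real.log m0| := one_mul _
  have hsum_w : (fun ω => ∑ j, aL ω j * (-Real.log (mtv M (b ω) j)))
      = fun ω => (∑ j, aL ω j * g j ω) - ∑ j, aL ω j * Real.log (mtv M0 (b ω) j) := by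
    funext ω
    rw [← Finset.sum_sub_distrib]
    apply Finset.sum_congr rfl
    intro j _
    simp only [hg_def]
    ring
  have int_sum_w : Integrable (fun ω => ∑ j, aL ω j * (-Real.log (mtv M (b ω) j))) μ := by
    rw [hsum_w]
    exact int_s'.sub (integrable_finset_sum _ fun j _ => int_u j)
  have int_w : ∀ j, Integrable (fun ω => aL ω j * (-Real.log (mtv M (b ω) j))) μ := by
    intro j
    have hwm : Measurable (fun ω => aL ω j * (-Real.log (mtv M (b ω) j))) :=
      (((measurable_pi_apply j).comp haL_meas).mul
        ((Real.measurable_log.comp (measurable_mtv hb_meas j)).neg))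
    apply Integrable.mono' int_sum_w hwm.aestronglyMeasurable
    filter_upwards with ω
    rw [Real.norm_eq_abs, abs_of_nonneg (hw_nonneg j ω)]
    exact Finset.single_le_sum (f := fun j => aL ω j * (-Real.log (mtv M (b ω) j)))
      (fun k _ => hw_nonneg k ω) (Finset.mem_univ j)
  have int_aLg : ∀ j, Integrable (fun ω => aL ω j * g j ω) μ := by
    intro j
    have heq : (fun ω => aL ω j * g j ω) = fun ω =>
        aL ω j * Real.log (mtv M0 (b ω) j) + aL ω j * (-Real.log (mtv M (b ω) j)) := by
      funext ω; simp only [hg_def]; ring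
    rw [heq]
    exact (int_u j).add (int_w j)
  -- conditional expectation pull-out
  have hbm : Measurable[MeasurableSpace.comap b inferInstance] b := Measurable.of_comap_le le_rfl
  have key : ∀ j, (∫ ω, aL ω j * g j ω ∂μ = ∫ ω, g j ω * mtv M0 (b ω) j ∂μ)
      ∧ Integrable (fun ω => g j ω * mtv M0 (b ω) j) μ := by
    intro j
    have hφ : Measurable (fun x : Fin C → ℝ =>
        Real.log (mtv M x j)) := by
      apply Real.measurable_log.comp
      exact Finset.measurable_sum _ (fun i _ => measurable_const.mul (measurable_pi_apply i))
    have hφ0 : Measurable (fun x : Fin C → ℝ => Real.log (mtv M0 x j)) := by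
      apply Real.measurable_log.comp
      exact Finset.measurable_sum _ (fun i _ => measurable_const.mul (measurable_pi_apply i))
    have hgm : StronglyMeasurable[MeasurableSpace.comap b inferInstance] (g j) :=
      Measurable.stronglyMeasurable ((hφ0.sub hφ).comp hbm)
    have hint1 : Integrable (g j * fun ω => aL ω j) μ := by
      have : (g j * fun ω => aL ω j) = fun ω => aL ω j * g j ω := by
        funext ω; simp [mul_comm]
      rw [this]; exact int_aLg j
    have hpull := condExp_mul_of_stronglyMeasurable_left (m := MeasurableSpace.comap b inferInstance) hgm hint1 (haLj_int j)
    have hmul : (g j * μ[(fun ω => aL ω j)|MeasurableSpace.comap b inferInstance]) =ᵐ[μ] fun ω => g j ω * mtv M0 (b ω) j := by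
      filter_upwards [hcondL j] with ω hω
      simp only [Pi.mul_apply, hω]
    have heq : μ[(g j * fun ω => aL ω j)|MeasurableSpace.comap b inferInstance] =ᵐ[μ] fun ω => g j ω * mtv M0 (b ω) j :=
      hpull.trans hmul
    constructor
    · calc ∫ ω, aL ω j * g j ω ∂μ = ∫ ω, (g j * fun ω => aL ω j) ω ∂μ := by
            apply integral_congr_ae; filter_upwards with ω; simp [mul_comm]
      _ = ∫ ω, (μ[(g j * fun ω => aL ω j)|MeasurableSpace.comap b inferInstance]) ω ∂μ := (integral_condExp hm).symm
      _ = ∫ ω, g j ω * mtv M0 (b ω) j ∂μ := integral_congr_ae heq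
    · exact integrable_condExp.congr heq
  have int_G : Integrable (fun ω => ∑ j, g j ω * mtv M0 (b ω) j) μ :=
    integrable_finset_sum _ fun j _ => (key j).2
  -- the deterministic correction
  set A : ℝ := ∑ j, q0U j * (Real.log (q0U j) - Real.log (qU j)) with hA_def
  have hA_eq : A = klReal q0U qU := by
    have := klReal_decomp (p := q0U) (q := qU) (q' := q0U)
      (fun j => (hq0Upos j).le) (fun j _ => ⟨hqUpos j, hq0Upos j⟩)
    rw [klReal_self, zero_add] at this
    exact this.symm
  have hA_nonneg0 : 0 ≤ A := by
    rw [hA_eq]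
    exact klReal_nonneg hq0U_simplex (fun j => (hqUpos j).le)
      (le_of_eq hqU_simplex.2) (fun j _ => hqUpos j)
  have hIU_eq : ∫ ω, klReal (aU ω) qU ∂μ = (∫ ω, klReal (aU ω) q0U ∂μ) + A := by
    have hdU : ∀ ω, klReal (aU ω) qU = klReal (aU ω) q0U
        + ∑ j, aU ω j * (Real.log (q0U j) - Real.log (qU j)) := fun ω =>
      klReal_decomp (haU_simplex ω).1 (fun j _ => ⟨hqUpos j, hq0Upos j⟩)
    calc ∫ ω, klReal (aU ω) qU ∂μ
        = ∫ ω, (klReal (aU ω) q0U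
          + ∑ j, aU ω j * (Real.log (q0U j) - Real.log (qU j))) ∂μ := by
          apply integral_congr_ae; filter_upwards with ω; exact hdU ω
      _ = (∫ ω, klReal (aU ω) q0U ∂μ)
          + ∫ ω, ∑ j, aU ω j * (Real.log (q0U j) - Real.log (qU j)) ∂μ :=
          integral_add int_fU0 (integrable_finset_sum _ fun j _ =>
            (haUj_int j).mul_const _)
      _ = (∫ ω, klReal (aU ω) q0U ∂μ) + A := by
          congr 1
          rw [integral_finset_sum _ (fun j _ => (haUj_int j).mul_const _)]
          rw [hA_def]
          apply Finset.sum_congr rfl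
          intro j _
          rw [integral_mul_const, hmeanU j, mul_comm]
  -- the stochastic correction
  set B : ℝ := ∫ ω, ∑ j, g j ω * mtv M0 (b ω) j ∂μ with hB_def
  have hIL_eq : ∫ ω, klReal (aL ω) (mtv M (b ω)) ∂μ
      = (∫ ω, klReal (aL ω) (mtv M0 (b ω)) ∂μ) + B := by
    calc ∫ ω, klReal (aL ω) (mtv M (b ω)) ∂μ
        = ∫ ω, (klReal (aL ω) (mtv M0 (b ω)) + ∑ j, aL ω j * g j ω) ∂μ :=
          integral_congr_ae hdecompL
      _ = (∫ ω, klReal (aL ω) (mtv M0 (b ω)) ∂μ) + ∫ ω, ∑ j, aL ω j * g j ω ∂μ :=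
          integral_add int_fL0 int_s'
      _ = (∫ ω, klReal (aL ω) (mtv M0 (b ω)) ∂μ) + B := by
          congr 1
          rw [integral_finset_sum _ (fun j _ => int_aLg j), hB_def,
            integral_finset_sum _ (fun j _ => (key j).2)]
          exact Finset.sum_congr rfl (fun j _ => (key j).1)
  -- pointwise interpretation of the stochastic correction
  have hG_eq : ∀ᵐ ω ∂μ, ∑ j, g j ω * mtv M0 (b ω) j
      = klReal (mtv M0 (b ω)) (mtv M (b ω)) := by
    filter_upwards [hgood2] with ω hω
    have := klReal_decomp (p := mtv M0 (b ω)) (q := mtv M (b ω)) (q' := mtv M0 (b ω))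
      (fun j => (hq0L_pos ω j).le) (fun j _ => ⟨hω j, hq0L_pos ω j⟩)
    rw [klReal_self, zero_add] at this
    rw [this]
    exact Finset.sum_congr rfl (fun j _ => by simp only [hg_def]; ring)
  have hG_nonneg : ∀ᵐ ω ∂μ, 0 ≤ ∑ j, g j ω * mtv M0 (b ω) j := by
    filter_upwards [hG_eq, hgood2] with ω hω hω2
    rw [hω]
    exact klReal_nonneg (mtv_mem_simplex hM0 (hb_simplex ω))
      (mtv_mem_simplex hM (hb_simplex ω)).1
      (le_of_eq (mtv_mem_simplex hM (hb_simplex ω)).2) (fun j _ => hω2 j)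
  have hB_nonneg : 0 ≤ B := integral_nonneg_of_ae hG_nonneg
  -- the key strict inequality
  have hkey : 0 < A + ξ * B := by
    rcases eq_or_ne M M0 with hMM | hMM
    · -- M = M0, so p ≠ p0 and the unlabeled part is strict
      have hpne : p ≠ p0 := by
        intro h
        exact hne (by rw [hMM, h])
      have hqne : q0U ≠ qU := by
        intro h
        apply hpne
        apply mtv_injective hM0det
        have h2 : mtv M0 p0 = mtv M p := h
        rw [hMM] at h2
        exact h2.symm
      have hA_pos : 0 < A := by
        rw [hA_eq]
        exact klReal_pos hq0U_simplex hqU_simplex hq0Upos hqUpos hqne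
      nlinarith [mul_nonneg hξ.le hB_nonneg]
    · -- M ≠ M0, so the labeled part is strict
      have hA_nonneg : 0 ≤ A := by
        rw [hA_eq]
        exact klReal_nonneg hq0U_simplex (fun j => (hqUpos j).le)
          (le_of_eq hqU_simplex.2) (fun j _ => hqUpos j)
      obtain ⟨i1, hi1⟩ : ∃ i, M i ≠ M0 i := Function.ne_iff.mp hMM
      obtain ⟨j1, hj1⟩ : ∃ j, M i1 j ≠ M0 i1 j := Function.ne_iff.mp hi1
      set d : ℝ := M i1 j1 - M0 i1 j1 with hd_def
      have hd0 : d ≠ 0 := sub_ne_zero.mpr hj1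
      have hdabs0 : 0 < |d| := abs_pos.mpr hd0
      have hdabs : |d| ≤ 1 := by
        rw [abs_le]
        constructor
        · have := hM.1 i1 j1
          have := rowStochastic_le_one hM0 i1 j1
          simp only [hd_def]; linarith
        · have := hM0.1 i1 j1
          have := rowStochastic_le_one hM i1 j1
          simp only [hd_def]; linarith
      set ε : ℝ := |d| / 4 with hε_def
      have hεpos : 0 < ε := by positivity
      have hμS := hpos i1 ε hεpos
      have hsep : ∀ ω, 1 - ε ≤ b ω i1 → mtv M (b ω) j1 ≠ mtv M0 (b ω) j1 := by
        intro ω hω heq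
        have hx := hb_simplex ω
        have hdiff : mtv M (b ω) j1 - mtv M0 (b ω) j1
            = ∑ k, (M k j1 - M0 k j1) * b ω k := by
          rw [mtv, mtv, ← Finset.sum_sub_distrib]
          exact Finset.sum_congr rfl (fun k _ => by ring)
        have hsplit : ∑ k, (M k j1 - M0 k j1) * b ω k
            = d * b ω i1 + ∑ k ∈ Finset.univ.erase i1, (M k j1 - M0 k j1) * b ω k :=
          (Finset.add_sum_erase _ _ (Finset.mem_univ i1)).symm
        have herase : ∑ k ∈ Finset.univ.erase i1, b ω k = 1 - b ω i1 := by
          have := Finset.add_sum_erase Finset.univ (fun k => b ω k) (Finset.mem_univ i1)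
          rw [hx.2] at this
          linarith
        have htail : |∑ k ∈ Finset.univ.erase i1, (M k j1 - M0 k j1) * b ω k| ≤ ε := by
          calc |∑ k ∈ Finset.univ.erase i1, (M k j1 - M0 k j1) * b ω k|
              ≤ ∑ k ∈ Finset.univ.erase i1, |(M k j1 - M0 k j1) * b ω k| :=
                Finset.abs_sum_le_sum_abs _ _
            _ ≤ ∑ k ∈ Finset.univ.erase i1, b ω k := by
                apply Finset.sum_le_sum
                intro k _
                rw [abs_mul, abs_of_nonneg (hx.1 k)]
                apply mul_le_of_le_one_left (hx.1 k)
                rw [abs_le]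
                have h1 := hM.1 k j1
                have h2 := rowStochastic_le_one hM0 k j1
                have h3 := hM0.1 k j1
                have h4 := rowStochastic_le_one hM k j1
                constructor <;> linarith
            _ = 1 - b ω i1 := herase
            _ ≤ ε := by linarith
        have hzero2 : d * b ω i1 + ∑ k ∈ Finset.univ.erase i1, (M k j1 - M0 k j1) * b ω k
            = 0 := by
          rw [← hsplit, ← hdiff, heq]; ring
        have habs : |d| * b ω i1 ≤ ε := by
          have : d * b ω i1 = -(∑ k ∈ Finset.univ.erase i1, (M k j1 - M0 k j1) * b ω k) := by
            linarith
          calc |d| * b ω i1 = |d * b ω i1| := by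
                rw [abs_mul, abs_of_nonneg (hx.1 i1)]
            _ = |∑ k ∈ Finset.univ.erase i1, (M k j1 - M0 k j1) * b ω k| := by
                rw [this, abs_neg]
            _ ≤ ε := htail
        -- but b ω i1 ≥ 1 - ε so |d| (1 - ε) ≤ ε, contradiction
        have h1ε : (0:ℝ) < 1 - ε := by
          simp only [hε_def]
          nlinarith
        nlinarith [mul_le_mul_of_nonneg_left hω hdabs0.le]
      have hB_pos : 0 < B := by
        rcases hB_nonneg.lt_or_eq with h | h
        · exact h
        · exfalso
          have hG0 : (fun ω => ∑ j, g j ω * mtv M0 (b ω) j) =ᵐ[μ] 0 :=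
            (integral_eq_zero_iff_of_nonneg_ae hG_nonneg int_G).mp h.symm
          have hfreq : ∃ᵐ ω ∂μ, ω ∈ {ω | 1 - ε ≤ b ω i1} :=
            frequently_ae_mem_iff.mpr hμS.ne'
          have hall : ∀ᵐ ω ∂μ, (∀ j, 0 < mtv M (b ω) j)
              ∧ (∑ j, g j ω * mtv M0 (b ω) j = klReal (mtv M0 (b ω)) (mtv M (b ω)))
              ∧ (∑ j, g j ω * mtv M0 (b ω) j = 0) := by
            filter_upwards [hgood2, hG_eq, hG0] with ω h1 h2 h3
            exact ⟨h1, h2, h3⟩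
          obtain ⟨ω, ⟨hω2, hωeq, hω0⟩, hωS⟩ := (hall.and_frequently hfreq).exists
          have hne2 : mtv M0 (b ω) ≠ mtv M (b ω) := by
            intro h2
            exact hsep ω hωS (congrFun h2 j1).symm
          have := klReal_pos (mtv_mem_simplex hM0 (hb_simplex ω))
            (mtv_mem_simplex hM (hb_simplex ω)) (hq0L_pos ω) hω2 hne2
          rw [← hωeq, hω0] at this
          exact lt_irrefl 0 this
      nlinarith [mul_pos hξ hB_pos]
  -- final assembly
  have e1 : ∫⁻ ω, klDiv (aU ω) q0U ∂μ = ENNReal.ofReal (∫ ω, klReal (aU ω) q0U ∂μ) := by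
    rw [lintegral_congr hklU0_eq]
    exact (ofReal_integral_eq_lintegral_ofReal int_fU0 (ae_of_all _ hfU0_nonneg)).symm
  have e2 : ∫⁻ ω, klDiv (aL ω) (mtv M0 (b ω)) ∂μ
      = ENNReal.ofReal (∫ ω, klReal (aL ω) (mtv M0 (b ω)) ∂μ) := by
    rw [lintegral_congr hklL0_eq]
    exact (ofReal_integral_eq_lintegral_ofReal int_fL0 (ae_of_all _ hfL0_nonneg)).symm
  have e3 : ∫⁻ ω, klDiv (aU ω) qU ∂μ = ENNReal.ofReal (∫ ω, klReal (aU ω) qU ∂μ) := by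
    rw [lintegral_congr hklU_eq]
    exact (ofReal_integral_eq_lintegral_ofReal int_fU (ae_of_all _ hfU_nonneg)).symm
  have e4 : ∫⁻ ω, klDiv (aL ω) (mtv M (b ω)) ∂μ
      = ENNReal.ofReal (∫ ω, klReal (aL ω) (mtv M (b ω)) ∂μ) := by
    rw [lintegral_congr_ae hklL_ae]
    exact (ofReal_integral_eq_lintegral_ofReal int_fL hfL_nonneg).symm
  rw [e1, e2, e3, e4]
  have hIU0_nonneg : 0 ≤ ∫ ω, klReal (aU ω) q0U ∂μ :=
    integral_nonneg hfU0_nonneg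
  have hIL0_nonneg : 0 ≤ ∫ ω, klReal (aL ω) (mtv M0 (b ω)) ∂μ :=
    integral_nonneg hfL0_nonneg
  rw [← ENNReal.ofReal_mul hξ.le, ← ENNReal.ofReal_mul hξ.le,
    ← ENNReal.ofReal_add hIU0_nonneg (mul_nonneg hξ.le hIL0_nonneg),
    ← ENNReal.ofReal_add (by rw [hIU_eq]; linarith)
      (mul_nonneg hξ.le (by rw [hIL_eq]; linarith))]
  apply (ENNReal.ofReal_lt_ofReal_iff_of_nonneg
    (add_nonneg hIU0_nonneg (mul_nonneg hξ.le hIL0_nonneg))).mpr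
  rw [hIU_eq, hIL_eq]
  nlinarith


end GBQL
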